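/- Let A[1..i] and B[1..m] be sequences with A[i] = B[j] and r ≥ 2. Define Q'(i−1, k, r−1) as the minimum possible largest element over all δ-almost increasing common subsequences of A[1..i−1] and B[1..k] of length r−1 ending at position k of B (∞ if none exist). Then there exists a δ-almost increasing common subsequence of A[1..i] and B[1..j] of length r ending at position j of B if and only if there exists k with 1 ≤ k < j such that a length-(r−1) such subsequence ending at position k exists and A[i] + δ > Q'(i−1, k, r−1). -/

import Mathlib

open List

def DeltaAlmostIncreasing (δ : ℝ) (l : List ℝ) : Prop :=
  l.Pairwise fun a b => b + δ > a

def ExistsDAICSEndingAt (δ : ℝ) (X B : List ℝ) (j r : ℕ) : Prop :=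
  ∃ S₀ : List ℝ, (S₀ ++ [B[j-1]!]).length = r ∧
    DeltaAlmostIncreasing δ (S₀ ++ [B[j-1]!]) ∧
    (S₀ ++ [B[j-1]!]) <+ X ∧ S₀ <+ B.take (j-1)

/-- Q'(i,k,r): the minimum possible largest element (as an extended real, ⊤ if no such
subsequence exists) over all δ-a.i. common subsequences of A[1..i] and B[1..k] of length r
ending at position k of B. -/
noncomputable def Qp (δ : ℝ) (A B : List ℝ) (i k r : ℕ) : EReal :=
  sInf {w : EReal | ∃ S₀ : List ℝ, (S₀ ++ [B[k-1]!]).length = r ∧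
    DeltaAlmostIncreasing δ (S₀ ++ [B[k-1]!]) ∧
    (S₀ ++ [B[k-1]!]) <+ A.take i ∧ S₀ <+ B.take (k-1) ∧
    ∀ x ∈ S₀ ++ [B[k-1]!], (x : EReal) ≤ w}

/-- every nonempty list of reals has a maximum element -/
lemma exists_max_real (l : List ℝ) (h : l ≠ []) : ∃ m ∈ l, ∀ x ∈ l, x ≤ m := by
  induction l with
  | nil => simp at h
  | cons a t ih =>
    rcases eq_or_ne t [] with rfl | ht
    · exact ⟨a, by simp⟩
    · obtain ⟨m, hm, hmax⟩ := ih ht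
      refine ⟨max a m, ?_, ?_⟩
      · rcases le_total a m with h' | h'
        · rw [max_eq_right h']; exact mem_cons_of_mem _ hm
        · rw [max_eq_left h']; exact mem_cons_self
      · intro x hx
        rcases mem_cons.mp hx with rfl | hx
        · exact le_max_left _ _
        · exact le_trans (hmax x hx) (le_max_right _ _)

/-- if `l ++ [y]` is a sublist of `L`, then `y` occurs at some index `n` of `L`
with `l` a sublist of `L.take n`. -/
lemma sublist_concat_split {α : Type*} {l : List α} {y : α} {L : List α}
    (h : l ++ [y] <+ L) :
    ∃ n, ∃ hn : n < L.length, L[n] = y ∧ l <+ L.take n := by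
  rw [List.append_sublist_iff] at h
  obtain ⟨L₁, L₂, rfl, h₁, h₂⟩ := h
  have hy : y ∈ L₂ := (List.singleton_sublist).mp h₂
  obtain ⟨s, t, rfl⟩ := List.append_of_mem hy
  refine ⟨L₁.length + s.length, ?_, ?_, ?_⟩
  · simp
  · rw [List.getElem_append_right (by simp)]
    simp [List.getElem_append_right (le_refl s.length)]
  · have : (L₁ ++ (s ++ y :: t)).take (L₁.length + s.length) = L₁ ++ s := by
      rw [List.take_append]
      simp [List.take_append]
    rw [this]
    exact h₁.trans (List.sublist_append_left _ _)

/-- sublist of a concat: either avoid the last element or use it. -/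
lemma sublist_concat_cases {α : Type*} {l L : List α} {a : α}
    (h : l <+ L ++ [a]) : l <+ L ∨ ∃ l', l = l' ++ [a] ∧ l' <+ L := by
  rw [List.sublist_append_iff] at h
  obtain ⟨l₁, l₂, rfl, h₁, h₂⟩ := h
  rcases List.sublist_singleton.mp h₂ with rfl | rfl
  · exact Or.inl (by simpa using h₁)
  · exact Or.inr ⟨l₁, rfl, h₁⟩

lemma take_eq_concat (L : List ℝ) (i : ℕ) (h1 : 1 ≤ i) (h2 : i ≤ L.length) :
    L.take i = L.take (i-1) ++ [L[i-1]!] := by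
  have hi : i - 1 < L.length := by omega
  rw [getElem!_pos L (i-1) hi]
  have : i = (i-1) + 1 := by omega
  conv_lhs => rw [this, List.take_succ]
  simp [List.getElem?_eq_getElem hi]

/-- Lemma 1, matching case, existence: if A[i] = B[j] and r ≥ 2, then a
δ-a.i. common subsequence of A[1..i] and B[1..j] of length r ending at position j exists
iff there is 1 ≤ k < j with a length-(r−1) one ending at position k for A[1..i−1]
with A[i] + δ > Q'(i−1, k, r−1). -/
theorem stmt_11 (δ : ℝ) (hδ : 0 < δ) (A B : List ℝ) (i j r : ℕ)
    (hi1 : 1 ≤ i) (hiA : i ≤ A.length) (hj1 : 1 ≤ j) (hjB : j ≤ B.length)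
    (heq : A[i-1]! = B[j-1]!) (hr : 2 ≤ r) :
    ExistsDAICSEndingAt δ (A.take i) B j r ↔
    ∃ k, 1 ≤ k ∧ k < j ∧ ExistsDAICSEndingAt δ (A.take (i-1)) B k (r-1) ∧
      ((A[i-1]! : EReal) + (δ : EReal) > Qp δ A B (i-1) k (r-1)) := by
  have hAi : A.take i = A.take (i-1) ++ [A[i-1]!] := take_eq_concat A i hi1 hiA
  constructor
  · rintro ⟨S₀, hlen, hdai, hsubA, hsubB⟩
    -- S₀ is nonempty
    have hS₀ne : S₀ ≠ [] := by
      intro h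
      rw [h] at hlen
      simp at hlen
      omega
    obtain ⟨S₁, y, rfl⟩ : ∃ S₁ y, S₀ = S₁ ++ [y] := by
      rcases List.eq_nil_or_concat S₀ with h | ⟨S₁, y, h⟩
      · exact absurd h hS₀ne
      · exact ⟨S₁, y, by simpa using h⟩
    -- find index of y in B.take (j-1)
    obtain ⟨n, hn, hgety, hS₁sub⟩ := sublist_concat_split hsubB
    have hnlt : n < j - 1 := by
      have := hn
      rw [List.length_take] at this
      omega
    have hnB : n < B.length := by omega
    refine ⟨n + 1, by omega, by omega, ?_⟩
    have hkB : B[n]! = y := by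
      rw [getElem!_pos B n hnB, ← hgety, List.getElem_take]
    have htake : (B.take (j-1)).take n = B.take n := by
      rw [List.take_take]
      congr 1
      omega
    rw [htake] at hS₁sub
    -- S₁ ++ [y] <+ A.take (i-1)
    have hsubA' : S₁ ++ [y] <+ A.take (i-1) := by
      rw [hAi] at hsubA
      rcases sublist_concat_cases hsubA with h | ⟨l', hl', h⟩
      · exact (List.sublist_append_left _ _).trans h
      · have : S₁ ++ [y] = l' := by
          have := congrArg List.dropLast hl'
          simpa [List.dropLast_concat] using this
        rwa [this]
    have hlen' : (S₁ ++ [y]).length = r - 1 := by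
      simp only [List.length_append, List.length_singleton] at hlen ⊢
      omega
    have hdai' : DeltaAlmostIncreasing δ (S₁ ++ [y]) :=
      List.Pairwise.sublist (List.sublist_append_left _ _) hdai
    have hlast : ∀ a ∈ S₁ ++ [y], B[j-1]! + δ > a := by
      rw [DeltaAlmostIncreasing, List.pairwise_append] at hdai
      intro a ha
      exact hdai.2.2 a ha B[j-1]! (by simp)
    obtain ⟨m, hmmem, hmax⟩ := exists_max_real (S₁ ++ [y]) (by simp)
    constructor
    · exact ⟨S₁, by simp only [Nat.add_sub_cancel, hkB]; exact hlen',
        by simp only [Nat.add_sub_cancel, hkB]; exact hdai',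
        by simp only [Nat.add_sub_cancel, hkB]; exact hsubA',
        hS₁sub⟩
    · have hQle : Qp δ A B (i-1) (n+1) (r-1) ≤ (m : EReal) := by
        apply sInf_le
        refine ⟨S₁, ?_, ?_, ?_, ?_, ?_⟩
        · simp only [Nat.add_sub_cancel, hkB]; exact hlen'
        · simp only [Nat.add_sub_cancel, hkB]; exact hdai'
        · simp only [Nat.add_sub_cancel, hkB]; exact hsubA'
        · exact hS₁sub
        · simp only [Nat.add_sub_cancel, hkB]
          intro x hx
          exact EReal.coe_le_coe_iff.mpr (hmax x hx)
      have hmlt : (m : EReal) < (A[i-1]! : EReal) + (δ : EReal) := by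
        rw [← EReal.coe_add, EReal.coe_lt_coe_iff, heq]
        exact hlast m hmmem
      exact lt_of_le_of_lt hQle hmlt
  · rintro ⟨k, hk1, hkj, _, hQ⟩
    rw [gt_iff_lt, Qp, sInf_lt_iff] at hQ
    obtain ⟨w, ⟨S₀, hlen, hdai, hsubA, hsubB, hbound⟩, hw⟩ := hQ
    refine ⟨S₀ ++ [B[k-1]!], ?_, ?_, ?_, ?_⟩
    · simp only [List.length_append, List.length_singleton] at hlen ⊢
      omega
    · rw [DeltaAlmostIncreasing, List.pairwise_append]
      refine ⟨hdai, List.pairwise_singleton _ _, ?_⟩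
      intro a ha b hb
      rw [List.mem_singleton] at hb
      subst hb
      have h1 : (a : EReal) < (A[i-1]! : EReal) + (δ : EReal) :=
        lt_of_le_of_lt (hbound a ha) hw
      rw [← EReal.coe_add, EReal.coe_lt_coe_iff, heq] at h1
      exact h1
    · rw [hAi, heq]
      exact List.Sublist.append hsubA (List.Sublist.refl _)
    · have h1 : S₀ ++ [B[k-1]!] <+ B.take k := by
        rw [take_eq_concat B k hk1 (by omega)]
        exact List.Sublist.append hsubB (List.Sublist.refl _)
      have h2 : B.take k = (B.take (j-1)).take k := by
        rw [List.take_take]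
        congr 1
        omega
      rw [h2] at h1
      exact h1.trans (List.take_sublist _ _)
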